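/- The defined operator ∘*α := (α∧∘α∧∘∘α) ∨ (¬α∧∘α∧∘∘α) is a consistency operator for LFI3: (1) for all formulas α, β: ∘*α, α, ¬α ⊨_LFI3 β; (2) for distinct atoms p, q: ∘*p, p ⊭_LFI3 q; (3) for distinct atoms p, q: ∘*p, ¬p ⊭_LFI3 q. -/

import Mathlib

/-- Formulas of the language with ¬, ∘, ∧, ∨, →. -/
inductive Fm : Type
  | atom : Nat → Fm
  | neg : Fm → Fm
  | circ : Fm → Fm
  | conj : Fm → Fm → Fm
  | disj : Fm → Fm → Fm
  | impl : Fm → Fm → Fm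

/-- The five truth values of LFI3: T=(1,0,0), t=(1,0,1), b=(1,1,1), f=(0,1,1), F=(0,1,0). -/
inductive V5 : Type
  | T | t | b | f | F
deriving DecidableEq

open V5

/-- Rank in the linear order F < f < b < t < T. -/
def rk : V5 → Nat
  | F => 0 | f => 1 | b => 2 | t => 3 | T => 4

/-- Infimum in the linear order F < f < b < t < T. -/
def min5 (x y : V5) : V5 := if rk x ≤ rk y then x else y

/-- Supremum in the linear order F < f < b < t < T. -/
def max5 (x y : V5) : V5 := if rk x ≤ rk y then y else x

/-- Negation: ¬(a₁,a₂,a₃) = (a₂,a₁,a₃). -/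
def neg5 : V5 → V5
  | T => F | t => f | b => b | f => t | F => T

/-- Consistency: ∘(a₁,a₂,a₃) = (~(a₁∧a₂), a₃, a₃∧~(a₁∧a₂)). -/
def circ5 : V5 → V5
  | T => T | t => b | b => F | f => b | F => T

/-- Strong negation ~a := ¬a ∧ ∘a. -/
def snd5 (x : V5) : V5 := min5 (neg5 x) (circ5 x)

/-- Implication a→b := ~a ∨ b. -/
def imp5 (x y : V5) : V5 := max5 (snd5 x) y

/-- Designated values: D = {T, t, b}. -/
def des (x : V5) : Prop := 2 ≤ rk x

/-- The valuation (homomorphism into the LFI3 algebra) extending an atom assignment. -/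
def ev (v : Nat → V5) : Fm → V5
  | Fm.atom n => v n
  | Fm.neg a => neg5 (ev v a)
  | Fm.circ a => circ5 (ev v a)
  | Fm.conj a c => min5 (ev v a) (ev v c)
  | Fm.disj a c => max5 (ev v a) (ev v c)
  | Fm.impl a c => imp5 (ev v a) (ev v c)

/-- Semantical consequence of LFI3. -/
def L3Cons (Γ : Set Fm) (ψ : Fm) : Prop :=
  ∀ v : Nat → V5, (∀ γ ∈ Γ, des (ev v γ)) → des (ev v ψ)

/-- The defined operator ∘*α := (α∧∘α∧∘∘α) ∨ (¬α∧∘α∧∘∘α). -/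
def cstar (a : Fm) : Fm :=
  ((a.conj a.circ).conj a.circ.circ).disj ((a.neg.conj a.circ).conj a.circ.circ)

instance : Fintype V5 := ⟨{T, t, b, f, F}, by intro x; cases x <;> simp⟩

instance (x : V5) : Decidable (des x) := Nat.decLe 2 (rk x)

/-- ∘* is a consistency operator for LFI3 (p = atom 0 and q = atom 1 are distinct atoms). -/
theorem stmt15 :
    (∀ α β : Fm, L3Cons {cstar α, α, α.neg} β) ∧
    (¬ L3Cons {cstar (Fm.atom 0), Fm.atom 0} (Fm.atom 1)) ∧
    (¬ L3Cons {cstar (Fm.atom 0), (Fm.atom 0).neg} (Fm.atom 1)) := by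
  have key : ∀ x : V5,
      ¬ (des (max5 (min5 (min5 x (circ5 x)) (circ5 (circ5 x)))
              (min5 (min5 (neg5 x) (circ5 x)) (circ5 (circ5 x))))
         ∧ des x ∧ des (neg5 x)) := by decide
  refine ⟨?_, ?_, ?_⟩
  · intro α β v h
    have hc := h (cstar α) (by simp)
    have ha := h α (by simp)
    have hn := h α.neg (by simp)
    simp only [cstar, ev] at hc hn
    exact absurd ⟨hc, ha, hn⟩ (key (ev v α))
  · intro h
    have := h (fun n => if n = 0 then V5.T else V5.F)
      (by intro γ hγ
          simp only [Set.mem_insert_iff, Set.mem_singleton_iff] at hγ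
          rcases hγ with rfl | rfl <;> decide)
    exact absurd this (by decide)
  · intro h
    have := h (fun n => if n = 0 then V5.F else V5.F)
      (by intro γ hγ
          simp only [Set.mem_insert_iff, Set.mem_singleton_iff] at hγ
          rcases hγ with rfl | rfl <;> decide)
    exact absurd this (by decide)
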